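/- A left S-semimodule P is k-projective if and only if every short exact sequence of left S-semimodules 0 → A → B → P → 0 is right-splitting, i.e., the surjective k-normal map g: B → P admits an S-linear section g': P → B with g ∘ g' = id_P. -/

import Mathlib

universe u

/-- `f` is `k`-normal. -/
def KNormal {S L M : Type*} [Semiring S] [AddCommMonoid L] [AddCommMonoid M]
    [Module S L] [Module S M] (f : L →ₗ[S] M) : Prop :=
  ∀ l₁ l₂ : L, f l₁ = f l₂ → ∃ k₁ k₂ : L, f k₁ = 0 ∧ f k₂ = 0 ∧ l₁ + k₁ = l₂ + k₂

/-- `P` is `k`-projective: lifting along every normal epimorphism. -/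
def KProjective (S : Type u) [Semiring S] (P : Type u) [AddCommMonoid P]
    [Module S P] : Prop :=
  ∀ (M N : Type u) (_ : AddCommMonoid M) (_ : AddCommMonoid N)
    (_ : Module S M) (_ : Module S N)
    (f : M →ₗ[S] N), Function.Surjective f → KNormal f →
    ∀ g : P →ₗ[S] N, ∃ h : P →ₗ[S] M, f.comp h = g

/-- `P` is `k`-projective iff every short exact sequence
`0 → A → B → P → 0` is right-splitting. -/
theorem kProjective_iff_ses_right_split
    (S : Type u) [Semiring S] (P : Type u) [AddCommMonoid P] [Module S P] :
    KProjective S P ↔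
      ∀ (A B : Type u) (_ : AddCommMonoid A) (_ : AddCommMonoid B)
        (_ : Module S A) (_ : Module S B)
        (f : A →ₗ[S] B) (g : B →ₗ[S] P),
        Function.Injective f → (∀ b : B, g b = 0 ↔ ∃ a : A, f a = b) →
        Function.Surjective g → KNormal g →
        ∃ g' : P →ₗ[S] B, g.comp g' = LinearMap.id := by
  constructor
  · intro hP A B _ _ _ _ f g _ _ hgsurj hgnorm
    exact hP B P _ _ _ _ g hgsurj hgnorm LinearMap.id
  · intro hsplit M N _ _ _ _ f hfsurj hfnorm g
    -- pullback
    let B : Submodule S (P × M) :=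
      { carrier := { x | g x.1 = f x.2 }
        add_mem' := by intro a b ha hb; simp_all [Set.mem_setOf_eq]
        zero_mem' := by simp [Set.mem_setOf_eq]
        smul_mem' := by intro c a ha; simp_all [Set.mem_setOf_eq] }
    let π : B →ₗ[S] P :=
      { toFun := fun x => x.1.1
        map_add' := fun _ _ => rfl
        map_smul' := fun _ _ => rfl }
    let A : Submodule S M := LinearMap.ker f
    let ι : A →ₗ[S] B :=
      { toFun := fun a => ⟨(0, a.1), by
          have : f a.1 = 0 := a.2
          simp [Set.mem_setOf_eq, this, B]⟩
        map_add' := by intro a b; ext <;> simp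
        map_smul' := by intro c a; ext <;> simp }
    have hιinj : Function.Injective ι := by
      intro a b hab
      have : (a : M) = b := congrArg (fun x : B => (x : P × M).2) hab
      exact Subtype.ext this
    have hexact : ∀ b : B, π b = 0 ↔ ∃ a : A, ι a = b := by
      intro b
      constructor
      · intro hb
        have hb1 : (b : P × M).1 = 0 := hb
        have hfb : f (b : P × M).2 = 0 := by
          have := b.2
          change g (b : P × M).1 = f (b : P × M).2 at this
          rw [← this, hb1, map_zero]
        exact ⟨⟨(b : P × M).2, hfb⟩, by
          apply Subtype.ext; exact Prod.ext hb1.symm rfl⟩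
      · rintro ⟨a, rfl⟩; rfl
    have hπsurj : Function.Surjective π := by
      intro p
      obtain ⟨m, hm⟩ := hfsurj (g p)
      exact ⟨⟨(p, m), hm.symm⟩, rfl⟩
    have hπnorm : KNormal π := by
      rintro ⟨⟨p₁, m₁⟩, h₁⟩ ⟨⟨p₂, m₂⟩, h₂⟩ hp
      have hp' : p₁ = p₂ := hp
      have h₁' : g p₁ = f m₁ := h₁
      have h₂' : g p₂ = f m₂ := h₂
      have hfm : f m₁ = f m₂ := by rw [← h₁', ← h₂', hp']
      obtain ⟨k₁, k₂, hk₁, hk₂, hk⟩ := hfnorm m₁ m₂ hfm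
      refine ⟨⟨(0, k₁), by simpa [B, Set.mem_setOf_eq] using hk₁.symm⟩,
              ⟨(0, k₂), by simpa [B, Set.mem_setOf_eq] using hk₂.symm⟩, rfl, rfl, ?_⟩
      apply Subtype.ext
      exact Prod.ext (by simpa using hp') (by simpa using hk)
    obtain ⟨g', hg'⟩ := hsplit A B _ _ _ _ ι π hιinj hexact hπsurj hπnorm
    let pr : B →ₗ[S] M :=
      { toFun := fun x => x.1.2
        map_add' := fun _ _ => rfl
        map_smul' := fun _ _ => rfl }
    refine ⟨pr.comp g', ?_⟩
    ext p
    have hmem := (g' p).2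
    change g (g' p : P × M).1 = f (g' p : P × M).2 at hmem
    have hπ : π (g' p) = p := congrFun (congrArg DFunLike.coe hg') p
    calc f.comp (pr.comp g') p = f ((g' p : P × M).2) := rfl
      _ = g ((g' p : P × M).1) := hmem.symm
      _ = g p := by rw [show ((g' p : P × M).1) = p from hπ]
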